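/- Let G be a (q+1)-regular graph (loops allowed, each loop contributing 1 to degree) on n = q² + q + 1 vertices whose adjacency matrix A satisfies A² = J + qI. Then for every subset S of vertices, the number of edges inside S (counting loops) is at least (q+1)|S|²/(2n) - √q·|S|/2. -/

import Mathlib

/-- Expander-mixing-type lower bound for polarity graphs: if `G` is a `(q+1)`-regular graph
(loops allowed, a loop adding `1` to the degree) on `n = q ^ 2 + q + 1` vertices whose 0-1
adjacency matrix `A` (with `A v v = 1` iff `v` has a loop) satisfies `A ^ 2 = J + q • I`, then
for every vertex subset `S`, the number of edges inside `S` (loops counted once), which equals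
`((∑ i ∈ S, ∑ j ∈ S, A i j) + ∑ i ∈ S, A i i) / 2`, is at least
`(q + 1) |S| ^ 2 / (2 n) - √q |S| / 2`. -/
theorem edges_in_subset_lower_bound (n : ℕ) (q : ℝ) (hq : 0 < q)
    (hn : (n : ℝ) = q ^ 2 + q + 1)
    (A : Matrix (Fin n) (Fin n) ℝ) (hsym : A.IsSymm)
    (h01 : ∀ i j, A i j = 0 ∨ A i j = 1)
    (hreg : ∀ i, ∑ j, A i j = q + 1)
    (hA : A * A = Matrix.of (fun _ _ => (1 : ℝ)) + q • (1 : Matrix (Fin n) (Fin n) ℝ))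
    (S : Finset (Fin n)) :
    ((∑ i ∈ S, ∑ j ∈ S, A i j) + ∑ i ∈ S, A i i) / 2 ≥
      (q + 1) * (S.card : ℝ) ^ 2 / (2 * n) - Real.sqrt q * S.card / 2 := by
  have hsym' : ∀ i j, A i j = A j i := by
    intro i j
    have := congrFun (congrFun hsym j) i
    simpa [Matrix.transpose_apply] using this
  have hnpos : (0:ℝ) < n := by nlinarith
  have hn0 : (n:ℝ) ≠ 0 := ne_of_gt hnpos
  have hcol : ∀ j, ∑ i, A i j = q + 1 := by
    intro j
    calc ∑ i, A i j = ∑ i, A j i := Finset.sum_congr rfl fun i _ => hsym' i j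
      _ = q + 1 := hreg j
  have hA2 : ∀ j k, ∑ i, A j i * A i k = 1 + (if j = k then q else 0) := by
    intro j k
    have := congrFun (congrFun hA j) k
    simpa [Matrix.mul_apply, Matrix.one_apply, mul_ite, mul_one, mul_zero] using this
  set s : ℝ := (S.card : ℝ) with hs
  set x : Fin n → ℝ := fun i => if i ∈ S then 1 else 0 with hxdef
  set c : ℝ := s / n with hc
  set y : Fin n → ℝ := fun i => x i - c with hydef
  have hxsum : ∑ i, x i = s := by simp [hxdef, hs]
  have hxsq : ∀ i, x i ^ 2 = x i := by
    intro i; by_cases h : i ∈ S <;> simp [hxdef, h]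
  have hx2sum : ∑ i, x i ^ 2 = s := by
    rw [Finset.sum_congr rfl fun i _ => hxsq i, hxsum]
  have hcsum : ∑ _i : Fin n, c = n * c := by
    simp [Finset.sum_const, mul_comm]
  have hX : ∑ i, ∑ j, x i * A i j * x j = ∑ i ∈ S, ∑ j ∈ S, A i j := by
    rw [← Finset.sum_subset (Finset.subset_univ S) (by
      intro i _ hi
      simp [hxdef, hi])]
    refine Finset.sum_congr rfl fun i hi => ?_
    rw [← Finset.sum_subset (Finset.subset_univ S) (by
      intro j _ hj
      simp [hxdef, hj])]
    refine Finset.sum_congr rfl fun j hj => ?_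
    simp [hxdef, hi, hj]
  set X : ℝ := ∑ i ∈ S, ∑ j ∈ S, A i j with hXdef
  set By : Fin n → ℝ := fun i => ∑ j, A i j * y j with hBy
  set M : ℝ := ∑ i, y i * By i with hMdef
  -- M = X - (q+1)s²/n
  have hM : M = X - (q + 1) * s ^ 2 / n := by
    have expand : M = (∑ i, ∑ j, x i * A i j * x j)
        - (∑ i, ∑ j, c * (A i j * x j))
        - (∑ i, ∑ j, (x i * A i j) * c)
        + (∑ i, ∑ j, c ^ 2 * A i j) := by
      simp only [hMdef, hBy, Finset.mul_sum, ← Finset.sum_sub_distrib, ← Finset.sum_add_distrib]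
      refine Finset.sum_congr rfl fun i _ => Finset.sum_congr rfl fun j _ => ?_
      simp only [hydef]; ring
    have e2 : ∑ i, ∑ j, c * (A i j * x j) = c * ((q + 1) * s) := by
      rw [Finset.sum_comm]
      calc ∑ j, ∑ i, c * (A i j * x j) = ∑ j, c * ((∑ i, A i j) * x j) := by
            refine Finset.sum_congr rfl fun j _ => ?_
            rw [Finset.sum_mul, Finset.mul_sum]
        _ = c * ((q + 1) * s) := by
            rw [← Finset.mul_sum]
            congr 1
            rw [Finset.sum_congr rfl fun j _ => by rw [hcol j], ← Finset.mul_sum, hxsum]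
    have e3 : ∑ i, ∑ j, (x i * A i j) * c = c * ((q + 1) * s) := by
      calc ∑ i, ∑ j, (x i * A i j) * c = ∑ i, (x i * (∑ j, A i j)) * c := by
            refine Finset.sum_congr rfl fun i _ => ?_
            rw [Finset.mul_sum, Finset.sum_mul]
        _ = ∑ i, (x i * (q + 1)) * c := by
            refine Finset.sum_congr rfl fun i _ => by rw [hreg i]
        _ = c * ((q + 1) * s) := by
            rw [← Finset.sum_mul, ← Finset.sum_mul, hxsum]; ring
    have e4 : ∑ i, ∑ j, c ^ 2 * A i j = c ^ 2 * (n * (q + 1)) := by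
      calc ∑ i, ∑ j, c ^ 2 * A i j = ∑ i : Fin n, c ^ 2 * (q + 1) := by
            refine Finset.sum_congr rfl fun i _ => ?_
            rw [← Finset.mul_sum, hreg i]
        _ = c ^ 2 * (n * (q + 1)) := by
            rw [Finset.sum_const, Finset.card_univ, Fintype.card_fin, nsmul_eq_mul]; ring
    rw [expand, hX, e2, e3, e4, hc]
    field_simp
    ring
  have hy2 : ∑ i, y i ^ 2 = s - s ^ 2 / n := by
    have : ∀ i, y i ^ 2 = x i ^ 2 - 2 * c * x i + c ^ 2 := fun i => by
      simp [hydef]; ring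
    rw [Finset.sum_congr rfl fun i _ => this i]
    simp only [Finset.sum_add_distrib, Finset.sum_sub_distrib, hx2sum, ← Finset.mul_sum, hxsum,
      Finset.sum_const, Finset.card_univ, Fintype.card_fin, nsmul_eq_mul]
    rw [hc]; field_simp; ring
  have hysum : ∑ i, y i = 0 := by
    simp only [hydef, Finset.sum_sub_distrib, hxsum, Finset.sum_const, Finset.card_univ,
      Fintype.card_fin, nsmul_eq_mul]
    rw [hc]; field_simp; ring
  have hB2 : ∑ i, By i ^ 2 = q * ∑ i, y i ^ 2 := by
    have step1 : ∑ i, By i ^ 2 = ∑ i, ∑ j, ∑ k, (A i j * y j) * (A i k * y k) := by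
      refine Finset.sum_congr rfl fun i _ => ?_
      rw [hBy, sq, Finset.sum_mul_sum]
    rw [step1, Finset.sum_comm]
    have step2 : ∀ j, ∑ i, ∑ k, (A i j * y j) * (A i k * y k)
        = ∑ k, (y j * y k) * ∑ i, A j i * A i k := by
      intro j
      rw [Finset.sum_comm]
      refine Finset.sum_congr rfl fun k _ => ?_
      rw [Finset.mul_sum]
      refine Finset.sum_congr rfl fun i _ => ?_
      rw [hsym' j i]; ring
    rw [Finset.sum_congr rfl fun j _ => step2 j]
    have step3 : ∀ j, ∑ k, (y j * y k) * ∑ i, A j i * A i k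
        = y j * (∑ k, y k) + q * y j ^ 2 := by
      intro j
      rw [Finset.sum_congr rfl fun k _ => by rw [hA2 j k]]
      simp only [mul_add, Finset.sum_add_distrib, mul_one, mul_ite, mul_zero]
      rw [Finset.sum_ite_eq (Finset.univ) j (fun k => y j * y k * q)]
      simp [Finset.mul_sum]
      ring
    rw [Finset.sum_congr rfl fun j _ => step3 j]
    simp only [Finset.sum_add_distrib, hysum, ← Finset.sum_mul, ← Finset.mul_sum, hysum]
    ring
  set t : ℝ := ∑ i, y i ^ 2 with ht
  have htnonneg : 0 ≤ t := Finset.sum_nonneg fun i _ => sq_nonneg _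
  have hts : t ≤ s := by
    rw [hy2]
    have : 0 ≤ s ^ 2 / n := by positivity
    linarith
  have hcs : M ^ 2 ≤ t * (q * t) := by
    calc M ^ 2 ≤ (∑ i, y i ^ 2) * ∑ i, By i ^ 2 :=
          Finset.sum_mul_sq_le_sq_mul_sq Finset.univ y By
      _ = t * (q * t) := by rw [hB2, ← ht]
  have hsq : (0:ℝ) ≤ Real.sqrt q * t := by positivity
  have hMlb : -(Real.sqrt q * t) ≤ M := by
    have h2 : M ^ 2 ≤ (Real.sqrt q * t) ^ 2 := by
      rw [mul_pow, Real.sq_sqrt hq.le]; nlinarith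
    have h4 : |M| ≤ Real.sqrt q * t := by
      have h5 := Real.sqrt_le_sqrt h2
      rwa [Real.sqrt_sq_eq_abs, Real.sqrt_sq hsq] at h5
    linarith [neg_abs_le M]
  have hXlb : X ≥ (q + 1) * s ^ 2 / n - Real.sqrt q * s := by
    have h3 : Real.sqrt q * t ≤ Real.sqrt q * s :=
      mul_le_mul_of_nonneg_left hts (Real.sqrt_nonneg q)
    have := hM
    linarith
  have hD : 0 ≤ ∑ i ∈ S, A i i :=
    Finset.sum_nonneg fun i _ => by rcases h01 i i with h | h <;> simp [h]
  have key : (q + 1) * s ^ 2 / (2 * n) = ((q + 1) * s ^ 2 / n) / 2 := by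
    rw [div_div]; ring
  rw [ge_iff_le, key]
  linarith [hXlb, hD]
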